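/- Let ρ_k : X → [0,1] be a sequence of measurable functions on a measure space converging almost everywhere to ρ, and let p_k = ρ_k^k converge weakly-* in L^∞ to p. If additionally ρ·p = p almost everywhere (law of state), then for every n ≥ 1, ρ_k^{n+k} = ρ_k^n · p_k converges weakly-* to ρ^n·p = p. -/

import Mathlib

open MeasureTheory Filter Set

theorem weak_strong_limit_pressure {X : Type*} [MeasurableSpace X]
    (μ : Measure X) [SigmaFinite μ]
    (ρk : ℕ → X → ℝ) (ρ p : X → ℝ)
    (hρkm : ∀ k, Measurable (ρk k)) (hρm : Measurable ρ) (hpm : Measurable p)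
    (hρkb : ∀ k x, ρk k x ∈ Icc (0:ℝ) 1)
    (hρb : ∀ x, ρ x ∈ Icc (0:ℝ) 1) (hpb : ∀ x, p x ∈ Icc (0:ℝ) 1)
    (hae : ∀ᵐ x ∂μ, Tendsto (fun k => ρk k x) atTop (nhds (ρ x)))
    (hweak : ∀ φ : X → ℝ, Integrable φ μ →
      Tendsto (fun k => ∫ x, φ x * ρk k x ^ k ∂μ) atTop (nhds (∫ x, φ x * p x ∂μ)))
    (hstate : ∀ᵐ x ∂μ, ρ x * p x = p x) :
    ∀ n : ℕ, 1 ≤ n →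
      (∀ᵐ x ∂μ, ρ x ^ n * p x = p x) ∧
      ∀ φ : X → ℝ, Integrable φ μ →
        Tendsto (fun k => ∫ x, φ x * ρk k x ^ (n + k) ∂μ) atTop
          (nhds (∫ x, φ x * p x ∂μ)) := by
  intro n hn
  -- Part 1: ρ^n * p = p a.e.
  have hpow : ∀ᵐ x ∂μ, ρ x ^ n * p x = p x := by
    filter_upwards [hstate] with x hx
    induction n with
    | zero => simp
    | succ m ih =>
      rcases Nat.eq_zero_or_pos m with hm | hm
      · subst hm; simpa using hx
      · have := ih hm
        calc ρ x ^ (m + 1) * p x = ρ x ^ m * (ρ x * p x) := by ring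
          _ = ρ x ^ m * p x := by rw [hx]
          _ = p x := this
  refine ⟨hpow, fun φ hφ => ?_⟩
  -- bounds for ρk powers
  have habs : ∀ k m x, |ρk k x ^ m| ≤ 1 := fun k m x => by
    rw [abs_pow]
    exact pow_le_one₀ (abs_nonneg _) (abs_le.mpr ⟨by linarith [(hρkb k x).1], (hρkb k x).2⟩)
  have hρabs : ∀ x, |ρ x ^ n| ≤ 1 := fun x => by
    rw [abs_pow]
    exact pow_le_one₀ (abs_nonneg _) (abs_le.mpr ⟨by linarith [(hρb x).1], (hρb x).2⟩)
  -- φ * ρ^n is integrable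
  have hφ' : Integrable (fun x => φ x * ρ x ^ n) μ := by
    have h := Integrable.bdd_mul (c := 1) hφ (hρm.pow_const n).aestronglyMeasurable
      (by filter_upwards with x; simpa [Real.norm_eq_abs] using hρabs x)
    exact h.congr (by filter_upwards with x; ring)
  -- weak convergence applied to φ * ρ^n
  have hW := hweak _ hφ'
  have heq : (∫ x, φ x * ρ x ^ n * p x ∂μ) = ∫ x, φ x * p x ∂μ := by
    apply integral_congr_ae
    filter_upwards [hpow] with x hx
    rw [mul_assoc, hx]
  rw [heq] at hW
  -- error term tends to 0 by dominated convergence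
  have hdom : Tendsto (fun k => ∫ x, φ x * (ρk k x ^ n - ρ x ^ n) * ρk k x ^ k ∂μ)
      atTop (nhds (∫ x, (0:ℝ) ∂μ)) := by
    apply tendsto_integral_of_dominated_convergence (fun x => 2 * |φ x|)
    · intro k
      exact (hφ.1.mul (((hρkm k).pow_const n).aestronglyMeasurable.sub
        (hρm.pow_const n).aestronglyMeasurable)).mul
        ((hρkm k).pow_const k).aestronglyMeasurable
    · simpa [Real.norm_eq_abs] using hφ.norm.const_mul 2
    · intro k
      filter_upwards with x
      have h1 : |ρk k x ^ n - ρ x ^ n| ≤ 2 := by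
        calc |ρk k x ^ n - ρ x ^ n| ≤ |ρk k x ^ n| + |ρ x ^ n| := abs_sub _ _
          _ ≤ 2 := by linarith [habs k n x, hρabs x]
      simp only [Real.norm_eq_abs, abs_mul]
      calc |φ x| * |ρk k x ^ n - ρ x ^ n| * |ρk k x ^ k|
          ≤ |φ x| * 2 * 1 :=
            mul_le_mul (mul_le_mul le_rfl h1 (abs_nonneg _) (abs_nonneg _))
              (habs k k x) (abs_nonneg _) (by positivity)
        _ = 2 * |φ x| := by ring
    · filter_upwards [hae] with x hx
      have h0 : Tendsto (fun k => φ x * (ρk k x ^ n - ρ x ^ n)) atTop (nhds 0) := by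
        have := ((hx.pow n).sub_const (ρ x ^ n)).const_mul (φ x)
        simpa using this
      apply squeeze_zero_norm _ (by simpa using h0.norm)
      intro k
      simp only [Real.norm_eq_abs, abs_mul]
      calc |φ x| * |ρk k x ^ n - ρ x ^ n| * |ρk k x ^ k|
          ≤ |φ x| * |ρk k x ^ n - ρ x ^ n| * 1 :=
            mul_le_mul le_rfl (habs k k x) (abs_nonneg _) (by positivity)
        _ = |φ x| * |ρk k x ^ n - ρ x ^ n| := mul_one _
  rw [integral_zero] at hdom
  -- combine
  have hInt1 : ∀ k, Integrable (fun x => φ x * (ρk k x ^ n - ρ x ^ n) * ρk k x ^ k) μ := by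
    intro k
    have hb : ∀ᵐ x ∂μ, ‖(ρk k x ^ n - ρ x ^ n) * ρk k x ^ k‖ ≤ 2 := by
      filter_upwards with x
      calc ‖(ρk k x ^ n - ρ x ^ n) * ρk k x ^ k‖
          = ‖ρk k x ^ n - ρ x ^ n‖ * ‖ρk k x ^ k‖ := norm_mul _ _
        _ ≤ 2 * 1 := by
            apply mul_le_mul _ _ (norm_nonneg _) (by norm_num)
            · calc ‖ρk k x ^ n - ρ x ^ n‖ ≤ |ρk k x ^ n| + |ρ x ^ n| := abs_sub _ _
                _ ≤ 2 := by linarith [habs k n x, hρabs x]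
            · simpa [Real.norm_eq_abs] using habs k k x
        _ = 2 := mul_one 2
    have h := Integrable.bdd_mul (c := 2) hφ
      ((((hρkm k).pow_const n).sub (hρm.pow_const n)).mul
        ((hρkm k).pow_const k)).aestronglyMeasurable hb
    exact h.congr (by filter_upwards with x; simp only [Pi.mul_apply, Pi.sub_apply]; ring)
  have hInt2 : ∀ k, Integrable (fun x => φ x * ρ x ^ n * ρk k x ^ k) μ := by
    intro k
    have h := Integrable.bdd_mul (c := 1) hφ'
      ((hρkm k).pow_const k).aestronglyMeasurable
      (by filter_upwards with x; simpa [Real.norm_eq_abs] using habs k k x)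
    exact h.congr (by filter_upwards with x; ring)
  have hcomb : ∀ k, (∫ x, φ x * ρk k x ^ (n + k) ∂μ) =
      (∫ x, φ x * (ρk k x ^ n - ρ x ^ n) * ρk k x ^ k ∂μ) +
      ∫ x, φ x * ρ x ^ n * ρk k x ^ k ∂μ := by
    intro k
    rw [← integral_add (hInt1 k) (hInt2 k)]
    apply integral_congr_ae
    filter_upwards with x
    rw [pow_add]; ring
  have hfin := hdom.add hW
  rw [zero_add] at hfin
  exact hfin.congr (fun k => (hcomb k).symm)
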